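/- The transformer f : RAM → P(RAM) ∪ {⊤} defined by: f(σ) = ⊤ if 1 ∉ dom σ; f(σ) = {σ[1 : 0]} if 1 ∈ dom σ and 2 ∈ dom σ; and f(σ) = {σ[1 : 0], σ[1 : 1]} if 1 ∈ dom σ and 2 ∉ dom σ, is local but not strongly local: f(σ1 * σ2) ⊆ f(σ1) * {σ2} holds whenever σ1 * σ2 is defined and f(σ1) ≠ ⊤, but there exist σ1, σ2 (for instance σ1 = [1 : 0] and σ2 = [2 : 0]) with σ1 * σ2 defined, f(σ1) ≠ ⊤, and f(σ1 * σ2) ≠ f(σ1) * {σ2}. -/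
import Mathlib


/-- `RAM`: finite partial functions from `Loc = {1,2,...}` (modelled as `ℕ+`)
to `Val = ℤ`. -/
def RAM : Type := { f : ℕ+ → Option ℤ // {x | f x ≠ none}.Finite }

/-- Union of two partial heaps (left-biased; used only on disjoint heaps). -/
def ramFun (σ1 σ2 : RAM) : ℕ+ → Option ℤ := fun x => (σ1.1 x).or (σ2.1 x)

lemma ramFun_finite (σ1 σ2 : RAM) : {x | ramFun σ1 σ2 x ≠ none}.Finite := by
  apply Set.Finite.subset (σ1.2.union σ2.2)
  intro x hx
  simp only [Set.mem_setOf_eq, ramFun, Set.mem_union] at hx ⊢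
  by_cases h1 : σ1.1 x = none
  · right; simpa [h1] using hx
  · left; exact h1

open Classical in
/-- The `*` operation of `RAM`: disjoint union of heaps, undefined (`none`)
when the domains overlap. -/
noncomputable def ramOp (σ1 σ2 : RAM) : Option RAM :=
  if ∀ x, σ1.1 x = none ∨ σ2.1 x = none then
    some ⟨ramFun σ1 σ2, ramFun_finite σ1 σ2⟩
  else none

/-- The empty heap `[]`. -/
def ramEmpty : RAM := ⟨fun _ => none, by simp⟩

/-- `σ[x : y]`: the heap `σ` updated to map `x` to `y`. -/
def ramUpdate (σ : RAM) (x : ℕ+) (v : ℤ) : RAM :=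
  ⟨fun y => if y = x then some v else σ.1 y, by
    apply Set.Finite.subset (σ.2.union (Set.finite_singleton x))
    intro y hy
    simp only [Set.mem_setOf_eq, Set.mem_union, Set.mem_singleton_iff] at hy ⊢
    by_cases h : y = x
    · right; exact h
    · left; simpa [h] using hy⟩

/-- Pointwise lifting of `*` to sets of states of `RAM`. -/
def setOpRam (p q : Set RAM) : Set RAM :=
  {σ | ∃ σ1 ∈ p, ∃ σ2 ∈ q, ramOp σ1 σ2 = some σ}

/-- A transformer on `RAM` (with `none` playing the role of `⊤`) is strongly
local if `f(σ1 * σ2) = f(σ1) * {σ2}` whenever `σ1 * σ2` is defined and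
`f(σ1) ≠ ⊤`. -/
def StrongLocalRam (f : RAM → Option (Set RAM)) : Prop :=
  ∀ σ1 σ2 σ12 p, ramOp σ1 σ2 = some σ12 → f σ1 = some p →
    f σ12 = some (setOpRam p {σ2})

/-- A transformer on `RAM` is local if `f(σ1 * σ2) ⊆ f(σ1) * {σ2}` whenever
`σ1 * σ2` is defined and `f(σ1) ≠ ⊤`. -/
def LocalRam (f : RAM → Option (Set RAM)) : Prop :=
  ∀ σ1 σ2 σ12 p, ramOp σ1 σ2 = some σ12 → f σ1 = some p →
    ∃ q, f σ12 = some q ∧ q ⊆ setOpRam p {σ2}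

open Classical in
/-- The transformer that: faults if cell `1` is not allocated; writes `0` to
cell `1` if cell `2` is allocated; and nondeterministically writes `0` or `1`
to cell `1` if cell `2` is not allocated. -/
noncomputable def sneakyF (σ : RAM) : Option (Set RAM) :=
  if σ.1 1 = none then none
  else if σ.1 2 ≠ none then some {ramUpdate σ 1 0}
  else some {ramUpdate σ 1 0, ramUpdate σ 1 1}

-- aux lemmas
lemma ramOp_some (σ1 σ2 σ12 : RAM) (h : ramOp σ1 σ2 = some σ12) :
    (∀ x, σ1.1 x = none ∨ σ2.1 x = none) ∧ σ12.1 = ramFun σ1 σ2 := by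
  unfold ramOp at h
  split at h
  · rename_i hd
    refine ⟨hd, ?_⟩
    cases h
    rfl
  · exact absurd h (by simp)

lemma ramOp_update_left (σ1 σ2 σ12 : RAM) (x : ℕ+) (v : ℤ)
    (h : ramOp σ1 σ2 = some σ12) (hx : σ2.1 x = none) :
    ramOp (ramUpdate σ1 x v) σ2 = some (ramUpdate σ12 x v) := by
  obtain ⟨hd, hf⟩ := ramOp_some σ1 σ2 σ12 h
  have hcond : ∀ y, (ramUpdate σ1 x v).1 y = none ∨ σ2.1 y = none := by
    intro y
    by_cases hy : y = x
    · right; rw [hy]; exact hx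
    · simpa [ramUpdate, hy] using hd y
  unfold ramOp
  rw [if_pos hcond]
  refine congrArg some (Subtype.ext (funext fun y => ?_))
  by_cases hy : y = x
  · simp [ramFun, ramUpdate, hy]
  · simp only [ramFun, ramUpdate, if_neg hy, hf]

lemma or_left_ne {a b : Option ℤ} (h : a ≠ none) : a.or b ≠ none := by
  cases a <;> simp_all

/-- the transformer `sneakyF` is local but not strongly local:
for `σ1 = [1 : 0]` and `σ2 = [2 : 0]`, `σ1 * σ2` is defined, `sneakyF σ1 ≠ ⊤`,
and `sneakyF (σ1 * σ2) ≠ sneakyF σ1 * {σ2}`. -/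
theorem sneakyF_local_not_strongLocal :
    LocalRam sneakyF ∧
    ∃ σ1 σ2 σ12 p, σ1 = ramUpdate ramEmpty 1 0 ∧ σ2 = ramUpdate ramEmpty 2 0 ∧
      ramOp σ1 σ2 = some σ12 ∧ sneakyF σ1 = some p ∧
      sneakyF σ12 ≠ some (setOpRam p {σ2}) := by
  constructor
  · intro σ1 σ2 σ12 p hop hf
    obtain ⟨hd, hfun⟩ := ramOp_some σ1 σ2 σ12 hop
    by_cases h1 : σ1.1 1 = none
    · simp [sneakyF, h1] at hf
    have h21 : σ2.1 1 = none := (hd 1).resolve_left h1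
    have h121 : σ12.1 1 ≠ none := by
      rw [hfun]; exact or_left_ne h1
    have hup : ∀ v : ℤ, ramUpdate σ1 1 v ∈ p →
        ramUpdate σ12 1 v ∈ setOpRam p {σ2} := by
      intro v hv
      exact ⟨_, hv, σ2, rfl, ramOp_update_left σ1 σ2 σ12 1 v hop h21⟩
    by_cases h2 : σ1.1 2 = none
    · simp only [sneakyF, if_neg h1, h2, ne_eq, not_true_eq_false, if_false,
        Option.some.injEq] at hf
      by_cases h122 : σ12.1 2 = none
      · refine ⟨{ramUpdate σ12 1 0, ramUpdate σ12 1 1},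
          by simp [sneakyF, h121, h122], ?_⟩
        intro σ hσ
        simp only [Set.mem_insert_iff, Set.mem_singleton_iff] at hσ
        rcases hσ with h | h <;> rw [h]
        · exact hup 0 (by rw [← hf]; left; rfl)
        · exact hup 1 (by rw [← hf]; right; rfl)
      · refine ⟨{ramUpdate σ12 1 0}, by simp [sneakyF, h121, h122], ?_⟩
        intro σ hσ
        simp only [Set.mem_singleton_iff] at hσ
        rw [hσ]
        exact hup 0 (by rw [← hf]; left; rfl)
    · simp only [sneakyF, if_neg h1, h2, ne_eq, not_false_eq_true, if_true,
        Option.some.injEq] at hf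
      have h122 : σ12.1 2 ≠ none := by
        rw [hfun]; exact or_left_ne h2
      refine ⟨{ramUpdate σ12 1 0}, by simp [sneakyF, h121, h122], ?_⟩
      intro σ hσ
      simp only [Set.mem_singleton_iff] at hσ
      rw [hσ]
      exact hup 0 (by rw [← hf]; rfl)
  · set σ1 := ramUpdate ramEmpty 1 0 with hσ1
    set σ2 := ramUpdate ramEmpty 2 0 with hσ2
    have h12 : σ1.1 2 = none := by
      simp [hσ1, ramUpdate, ramEmpty, show (2:ℕ+) ≠ 1 by decide]
    have h21 : σ2.1 1 = none := by
      simp [hσ2, ramUpdate, ramEmpty, show (1:ℕ+) ≠ 2 by decide]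
    have h11 : σ1.1 1 = some 0 := by simp [hσ1, ramUpdate]
    have h22 : σ2.1 2 = some 0 := by simp [hσ2, ramUpdate]
    have hcond : ∀ x, σ1.1 x = none ∨ σ2.1 x = none := by
      intro x
      by_cases hx : x = 1
      · right; rw [hx]; exact h21
      · left; simp [hσ1, ramUpdate, ramEmpty, hx]
    have hop : ramOp σ1 σ2 = some ⟨ramFun σ1 σ2, ramFun_finite σ1 σ2⟩ := by
      unfold ramOp; rw [if_pos hcond]
    set σ12 : RAM := ⟨ramFun σ1 σ2, ramFun_finite σ1 σ2⟩ with hσ12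
    have h121 : σ12.1 1 = some 0 := by simp [hσ12, ramFun, h11]
    have h122 : σ12.1 2 = some 0 := by simp [hσ12, ramFun, h12, h22]
    refine ⟨σ1, σ2, σ12, {ramUpdate σ1 1 0, ramUpdate σ1 1 1}, rfl, rfl, hop,
      by simp [sneakyF, h11, h12], ?_⟩
    intro heq
    rw [sneakyF, if_neg (by rw [h121]; simp), if_pos (by rw [h122]; simp),
      Option.some.injEq] at heq
    have hmem : ramUpdate σ12 1 1 ∈ setOpRam {ramUpdate σ1 1 0, ramUpdate σ1 1 1} {σ2} :=
      ⟨ramUpdate σ1 1 1, by right; rfl, σ2, rfl,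
        ramOp_update_left σ1 σ2 σ12 1 1 hop h21⟩
    rw [← heq] at hmem
    simp only [Set.mem_singleton_iff] at hmem
    have := congrArg (fun σ : RAM => σ.1 1) hmem
    simp [ramUpdate] at this
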